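/- Let F : (Fin n → Bool) → Bool be a total Boolean function, C : Set (Fin n → Bool) a constraint, and define the total function F→ by F→ x = true iff x ∉ C or F x = true (the implication from the constraint to the decision function). Let x ∈ C with F x = true. Then for every total Boolean function G : (Fin n → Bool) → Bool agreeing with F on C (i.e., G y = F y for all y ∈ C), every sufficient reason of G(x)=1 is subsumed by some sufficient reason of F→(x)=1 (both viewed as partial functions via some ∘ ·). -/

import Mathlib

/-- An instance `x : Fin n → Bool` satisfies the term `t` if `x i = b` whenever `t i = some b`. -/
def Satisfies {n : ℕ} (x : Fin n → Bool) (t : Fin n → Option Bool) : Prop :=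
  ∀ i b, t i = some b → x i = b

/-- The set of instances satisfying a term. -/
def termSet {n : ℕ} (t : Fin n → Option Bool) : Set (Fin n → Bool) :=
  {x | Satisfies x t}

/-- A term is an implicant of a partial Boolean function `f` if `f` is never `some false` on it. -/
def Implicant {n : ℕ} (f : (Fin n → Bool) → Option Bool) (t : Fin n → Option Bool) : Prop :=
  ∀ x ∈ termSet t, f x ≠ some false

/-- A prime implicant: an implicant not properly subsumed by any other implicant. -/
def PrimeImplicant {n : ℕ} (f : (Fin n → Bool) → Option Bool) (t : Fin n → Option Bool) : Prop :=
  Implicant f t ∧ ∀ s, Implicant f s → termSet t ⊆ termSet s → termSet s = termSet t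

/-- A sufficient reason of `f(x)=1`: a prime implicant of `f` satisfied by `x`. -/
def SufficientReason {n : ℕ} (f : (Fin n → Bool) → Option Bool) (x : Fin n → Bool)
    (t : Fin n → Option Bool) : Prop :=
  PrimeImplicant f t ∧ Satisfies x t

open Classical in
/-- The constrained partial function `F_C`. -/
noncomputable def constrain {n : ℕ} (F : (Fin n → Bool) → Bool) (C : Set (Fin n → Bool)) :
    (Fin n → Bool) → Option Bool :=
  fun x => if x ∈ C then some (F x) else Option.none

/-- The total completion `f̄` of a partial function: true iff `f x ≠ some false`. -/
def totalCompletion {n : ℕ} (f : (Fin n → Bool) → Option Bool) : (Fin n → Bool) → Bool :=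
  fun x => decide (f x ≠ some false)


lemma sub_of_termSet_sub {n : ℕ} {t s : Fin n → Option Bool} {y : Fin n → Bool}
    (hy : Satisfies y t) (hsub : termSet t ⊆ termSet s) :
    ∀ i b, s i = some b → t i = some b := by
  intro i b hsb
  cases ht : t i with
  | some c =>
    have hyi : y i = c := hy i c ht
    have hys : Satisfies y s := hsub hy
    have hcb : y i = b := hys i b hsb
    rw [hyi] at hcb; rw [hcb]

  | none =>
    exfalso
    set y' := Function.update y i (!b) with hy'
    have hy't : Satisfies y' t := by
      intro j c hjc
      by_cases hji : j = i
      · subst hji; rw [ht] at hjc; exact absurd hjc (by simp)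
      · rw [hy', Function.update_of_ne hji]; exact hy j c hjc
    have : y' i = b := (hsub hy't) i b hsb
    rw [hy', Function.update_self] at this
    simp at this

noncomputable def defCard {n : ℕ} (s : Fin n → Option Bool) : ℕ :=
  (Finset.univ.filter fun i => (s i).isSome).card

theorem stmt12 {n : ℕ} (F : (Fin n → Bool) → Bool) (C : Set (Fin n → Bool))
    (Fimp : (Fin n → Bool) → Bool) (hFimp : ∀ y, Fimp y = true ↔ (y ∉ C ∨ F y = true))
    (x : Fin n → Bool) (hxC : x ∈ C) (hFx : F x = true)
    (G : (Fin n → Bool) → Bool) (hG : ∀ y ∈ C, G y = F y)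
    (t : Fin n → Option Bool) (ht : SufficientReason (fun y => some (G y)) x t) :
    ∃ s : Fin n → Option Bool,
      SufficientReason (fun y => some (Fimp y)) x s ∧ termSet t ⊆ termSet s := by
  classical
  obtain ⟨⟨htI, htP⟩, hxt⟩ := ht
  -- t is an implicant of Fimp
  have himp : ∀ s : Fin n → Option Bool, (∀ i b, s i = some b → t i = some b) →
      Satisfies x t → True := fun _ _ _ => trivial
  have htFimp : Implicant (fun y => some (Fimp y)) t := by
    intro y hy hcon
    have hGy : G y = true := by
      have h := htI y hy
      simp only [ne_eq, Option.some.injEq] at h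
      revert h; cases G y <;> simp
    have : Fimp y = false := by simpa using hcon
    rcases (Classical.em (y ∈ C)) with hyc | hyc
    · have : Fimp y = true := (hFimp y).mpr (Or.inr (by rw [← hG y hyc]; exact hGy))
      simp_all
    · have : Fimp y = true := (hFimp y).mpr (Or.inl hyc)
      simp_all
  -- minimize defCard among implicants below t
  set P : (Fin n → Option Bool) → Prop := fun s =>
    Implicant (fun y => some (Fimp y)) s ∧ ∀ i b, s i = some b → t i = some b with hP
  have hPt : P t := ⟨htFimp, fun _ _ h => h⟩
  have hex : ∃ k, ∃ s, P s ∧ defCard s = k := ⟨defCard t, t, hPt, rfl⟩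
  obtain ⟨s, hPs, hksc⟩ := Nat.find_spec hex
  obtain ⟨hsI, hst⟩ := hPs
  have hts : termSet t ⊆ termSet s := by
    intro y hy i b hsb
    exact hy i b (hst i b hsb)
  have hxs : Satisfies x s := hts hxt
  refine ⟨s, ⟨⟨hsI, ?_⟩, hxs⟩, hts⟩
  intro s' hs'I hsub'
  have hs'le : ∀ i b, s' i = some b → s i = some b := sub_of_termSet_sub hxs hsub'
  have hs't : ∀ i b, s' i = some b → t i = some b := fun i b h => hst i b (hs'le i b h)
  have hsubset : (Finset.univ.filter fun i => ((s' i).isSome)) ⊆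
      (Finset.univ.filter fun i => ((s i).isSome)) := by
    intro i hi
    simp only [Finset.mem_filter, Finset.mem_univ, true_and] at *
    obtain ⟨b, hb⟩ := Option.isSome_iff_exists.mp hi
    exact Option.isSome_iff_exists.mpr ⟨b, hs'le i b hb⟩
  have hle : defCard s' ≤ defCard s := Finset.card_le_card hsubset
  have hge : defCard s ≤ defCard s' := by
    rw [hksc]
    exact Nat.find_min' hex ⟨s', ⟨hs'I, hs't⟩, rfl⟩
  have hcard : defCard s' = defCard s := le_antisymm hle hge
  have heqset : (Finset.univ.filter fun i => ((s' i).isSome)) =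
      (Finset.univ.filter fun i => ((s i).isSome)) :=
    Finset.eq_of_subset_of_card_le hsubset (le_of_eq hcard.symm)
  have : s' = s := by
    funext i
    cases h : s i with
    | none =>
      cases h' : s' i with
      | none => rfl
      | some b =>
        have := hs'le i b h'
        rw [h] at this
        cases this
    | some b =>
      have hi : (s' i).isSome := by
        have : i ∈ (Finset.univ.filter fun i => ((s i).isSome)) := by
          simp [h]
        rw [← heqset] at this
        simpa using this
      obtain ⟨c, hc⟩ := Option.isSome_iff_exists.mp hi
      have := hs'le i c hc
      rw [h] at this
      rw [hc, Option.some_inj.mp this]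
  rw [this]
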